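/- Let θ_0, θ_t, θ_1 be real numbers such that 1 + 2θ_1 is not a nonpositive integer, and define on (0,1) the hypergeometric series F(t) = Σ_{k=0}^∞ [(θ_0+θ_t+θ_1+1/2)_k · (θ_0−θ_t+θ_1+1/2)_k / ((1+2θ_1)_k · k!)]·t^k, where (x)_k = x(x+1)⋯(x+k−1) denotes the ascending Pochhammer symbol. Then the function τ(t) = t^{(θ_1+1/2)²−θ_0²−θ_t²}·(1−t)^{(θ_0+1/2)²−θ_t²−θ_1²}·F(t) (real powers of positive real bases) satisfies, on (0,1), the linear ODE τ'' + 2·[ (θ_0²−θ_1²+θ_t²+1/4)/t + (θ_1²−θ_0²+θ_t²+1/4)/(t−1) ]·τ' + [ ((θ_0+θ_1)²+θ_t²−1/4)/(t(t−1)) + ∏_{ε=±1} ( (θ_0²+θ_t²−(εθ_1+1/2)²)/t + (θ_t²+θ_1²−(εθ_0+1/2)²)/(t−1) ) ]·τ = 0. -/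

import Mathlib

open Set Polynomial Filter

set_option maxRecDepth 8000
set_option maxHeartbeats 1600000

noncomputable def dd (a b c : ℝ) (k : ℕ) : ℝ :=
  (ascPochhammer ℝ k).eval a * (ascPochhammer ℝ k).eval b /
    ((ascPochhammer ℝ k).eval c * (Nat.factorial k : ℝ))

lemma poch_succ (x : ℝ) (k : ℕ) :
    (ascPochhammer ℝ (k+1)).eval x = (ascPochhammer ℝ k).eval x * (x + k) := by
  simp [ascPochhammer_succ_right, eval_mul]

lemma poch_ne (c : ℝ) (hc : ∀ m : ℕ, c ≠ -(m : ℝ)) (k : ℕ) :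
    (ascPochhammer ℝ k).eval c ≠ 0 := by
  induction k with
  | zero => simp
  | succ n ih =>
    rw [poch_succ]
    refine mul_ne_zero ih ?_
    intro h
    exact hc n (by linarith)

lemma dd_succ (a b c : ℝ) (hc : ∀ m : ℕ, c ≠ -(m : ℝ)) (k : ℕ) :
    dd a b c (k+1) = dd a b c k * (((a + k) * (b + k)) / ((c + k) * (k+1))) := by
  have hck : c + k ≠ 0 := fun h => hc k (by linarith)
  have hpk := poch_ne c hc k
  have hkf : (Nat.factorial k : ℝ) ≠ 0 := Nat.cast_ne_zero.mpr (Nat.factorial_ne_zero k)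
  have hk1 : ((k:ℝ)+1) ≠ 0 := by positivity
  simp only [dd, poch_succ, Nat.factorial_succ, Nat.cast_mul, Nat.cast_add, Nat.cast_one]
  field_simp

-- tendsto of (a+k)/(c+k) to 1 when c+k never zero
lemma aux_tendsto (a c : ℝ) : Tendsto (fun k : ℕ => (a + k) / (c + k)) atTop (nhds 1) := by
  have h1 : Tendsto (fun k : ℕ => c + (k:ℝ)) atTop atTop :=
    tendsto_atTop_add_const_left _ _ tendsto_natCast_atTop_atTop
  have h2 : Tendsto (fun k : ℕ => (a - c) * (c + (k:ℝ))⁻¹) atTop (nhds 0) := by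
    simpa using (h1.inv_tendsto_atTop).const_mul (a - c)
  have h3 : Tendsto (fun k : ℕ => 1 + (a - c) * (c + (k:ℝ))⁻¹) atTop (nhds 1) := by
    simpa using h2.const_add 1
  refine h3.congr' ?_
  filter_upwards [h1.eventually_gt_atTop 0] with k hk
  have : c + (k:ℝ) ≠ 0 := ne_of_gt hk
  field_simp
  ring

lemma aux_ratio_tendsto (a b c : ℝ) (r : ℝ) :
    Tendsto (fun k : ℕ => ((2 + (k:ℝ)) / (1 + (k:ℝ)))^2 *
      |((a + k) * (b + k)) / ((c + k) * (1 + (k:ℝ)))| * r) atTop (nhds r) := by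
  have h1 : Tendsto (fun k : ℕ => ((2 + (k:ℝ)) / (1 + (k:ℝ)))^2) atTop (nhds 1) := by
    simpa using (aux_tendsto 2 1).pow 2
  have h2 : Tendsto (fun k : ℕ => |((a + k) * (b + k)) / ((c + k) * (1 + (k:ℝ)))|)
      atTop (nhds 1) := by
    have h3 : Tendsto (fun k : ℕ => ((a + k)/(c + k)) * ((b + k)/(1 + (k:ℝ))))
        atTop (nhds 1) := by
      simpa using (aux_tendsto a c).mul (aux_tendsto b 1)
    have h4 := h3.abs
    simp only [abs_one] at h4
    refine h4.congr fun k => ?_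
    rw [div_mul_div_comm]
  simpa using (h1.mul h2).mul_const r

lemma dd_summable (a b c : ℝ) (hc : ∀ m : ℕ, c ≠ -(m : ℝ)) {r : ℝ} (hr0 : 0 ≤ r)
    (hr1 : r < 1) : Summable (fun k : ℕ => ((k:ℝ)+1)^2 * |dd a b c k| * r^k) := by
  set q : ℕ → ℝ := fun k => ((k:ℝ)+1)^2 * |dd a b c k| * r^k with hq
  have hqn : ∀ k, 0 ≤ q k := by intro k; positivity
  set r' : ℝ := (1 + r)/2 with hr'
  have hrr' : r < r' := by simp [hr']; linarith
  have hr'1 : r' < 1 := by simp [hr']; linarith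
  apply summable_of_ratio_norm_eventually_le hr'1
  have hev := (aux_ratio_tendsto a b c r).eventually_le_const hrr'
  filter_upwards [hev] with k hk
  have hkey : q (k+1) = ((2 + (k:ℝ)) / (1 + (k:ℝ)))^2 *
      |((a + k) * (b + k)) / ((c + k) * (1 + (k:ℝ)))| * r * q k := by
    have hd : |dd a b c (k+1)| = |dd a b c k| * |((a + k) * (b + k)) / ((c + k) * ((k:ℝ)+1))| := by
      rw [dd_succ a b c hc k, abs_mul]
    have hk1 : ((1:ℝ) + k) ≠ 0 := by positivity
    simp only [hq]
    push_cast
    rw [show ((k:ℝ)+1+1) = 2 + k by ring, show (c + (k:ℝ)) * ((k:ℝ)+1) = (c+k)*(1+(k:ℝ)) by ring] at *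
    rw [hd]
    field_simp
    ring
  rw [Real.norm_eq_abs, Real.norm_eq_abs, abs_of_nonneg (hqn _), abs_of_nonneg (hqn _), hkey]
  have := hqn k
  nlinarith [hqn k, abs_nonneg (((a + (k:ℝ)) * (b + k)) / ((c + k) * (1 + (k:ℝ)))), sq_nonneg ((2 + (k:ℝ)) / (1 + (k:ℝ)))]

lemma bound1 {r : ℝ} (hr : 0 < r) (k : ℕ) :
    (k:ℝ) * r^(k-1) ≤ r⁻¹ * (((k:ℝ)+1)^2 * r^k) := by
  cases k with
  | zero => simp; positivity
  | succ n =>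
    have h1 : (n+1) - 1 = n := rfl
    rw [h1]
    have hrn : (0:ℝ) < r^n := by positivity
    have key : r⁻¹ * ((((n:ℝ))+1+1)^2 * r^(n+1)) = ((n:ℝ)+2)^2 * r^n := by
      rw [pow_succ]; field_simp; ring
    push_cast
    rw [key]
    have h5 : ((n:ℝ)+1) ≤ ((n:ℝ)+2)^2 := by nlinarith [sq_nonneg ((n:ℝ))]
    nlinarith [mul_le_mul_of_nonneg_right h5 (le_of_lt hrn)]

lemma bound2 {r : ℝ} (hr : 0 < r) (k : ℕ) :
    (k:ℝ) * ((↑(k-1):ℝ) * r^(k-2)) ≤ r⁻¹ * r⁻¹ * (((k:ℝ)+1)^2 * r^k) := by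
  match k with
  | 0 => simp; positivity
  | 1 => simp; positivity
  | (n+2) =>
    have h1 : (n+2) - 1 = n+1 := rfl
    have h2 : (n+2) - 2 = n := rfl
    rw [h1, h2]
    have hrn : (0:ℝ) < r^n := by positivity
    have key : r⁻¹ * r⁻¹ * (((n:ℝ)+2+1)^2 * r^(n+2)) = ((n:ℝ)+3)^2 * r^n := by
      rw [pow_succ, pow_succ]; field_simp; ring
    push_cast
    rw [key]
    have h5 : ((n:ℝ)+2) * ((n:ℝ)+1) ≤ ((n:ℝ)+3)^2 := by nlinarith [sq_nonneg ((n:ℝ))]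
    calc ((n:ℝ)+2) * (((n:ℝ)+1) * r^n) = (((n:ℝ)+2) * ((n:ℝ)+1)) * r^n := by ring
    _ ≤ ((n:ℝ)+3)^2 * r^n := mul_le_mul_of_nonneg_right h5 (le_of_lt hrn)

lemma dd_summable' (a b c : ℝ) (hc : ∀ m : ℕ, c ≠ -(m : ℝ)) {r : ℝ} (hr0 : 0 < r)
    (hr1 : r < 1) (f : ℕ → ℝ) (C : ℝ) (hC : 0 ≤ C)
    (hf : ∀ k, |f k| ≤ C * (((k:ℝ)+1)^2 * |dd a b c k| * r^k)) : Summable f :=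
  Summable.of_norm_bounded ((dd_summable a b c hc (le_of_lt hr0) hr1).mul_left C)
    (fun k => by simpa [Real.norm_eq_abs] using hf k)

lemma summable_S0 (a b c : ℝ) (hc : ∀ m : ℕ, c ≠ -(m : ℝ)) {t r : ℝ} (hr0 : 0 < r)
    (hr1 : r < 1) (ht : |t| ≤ r) : Summable (fun k : ℕ => dd a b c k * t^k) := by
  apply dd_summable' a b c hc hr0 hr1 _ 1 zero_le_one
  intro k
  rw [abs_mul, abs_pow, one_mul]
  have h1 : |t|^k ≤ r^k := pow_le_pow_left₀ (abs_nonneg t) ht k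
  have h2 : (1:ℝ) ≤ ((k:ℝ)+1)^2 := by nlinarith [Nat.cast_nonneg (α := ℝ) k]
  have h3 : (0:ℝ) ≤ |dd a b c k| := abs_nonneg _
  calc |dd a b c k| * |t|^k ≤ |dd a b c k| * r^k := mul_le_mul_of_nonneg_left h1 h3
    _ = 1 * (|dd a b c k| * r^k) := by ring
    _ ≤ ((k:ℝ)+1)^2 * (|dd a b c k| * r^k) := by
        apply mul_le_mul_of_nonneg_right h2; positivity
    _ = ((k:ℝ)+1)^2 * |dd a b c k| * r^k := by ring

lemma summable_S1 (a b c : ℝ) (hc : ∀ m : ℕ, c ≠ -(m : ℝ)) {t r : ℝ} (hr0 : 0 < r)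
    (hr1 : r < 1) (ht : |t| ≤ r) :
    Summable (fun k : ℕ => dd a b c k * ((k:ℝ) * t^(k-1))) := by
  apply dd_summable' a b c hc hr0 hr1 _ r⁻¹ (by positivity)
  intro k
  rw [abs_mul, abs_mul, abs_pow, Nat.abs_cast]
  have h1 : |t|^(k-1) ≤ r^(k-1) := pow_le_pow_left₀ (abs_nonneg t) ht _
  have h2 := bound1 hr0 k
  have h3 : (0:ℝ) ≤ |dd a b c k| := abs_nonneg _
  calc |dd a b c k| * ((k:ℝ) * |t|^(k-1)) ≤ |dd a b c k| * ((k:ℝ) * r^(k-1)) := by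
        have : (k:ℝ) * |t|^(k-1) ≤ (k:ℝ) * r^(k-1) :=
          mul_le_mul_of_nonneg_left h1 (Nat.cast_nonneg k)
        exact mul_le_mul_of_nonneg_left this h3
    _ ≤ |dd a b c k| * (r⁻¹ * (((k:ℝ)+1)^2 * r^k)) := mul_le_mul_of_nonneg_left h2 h3
    _ = r⁻¹ * (((k:ℝ)+1)^2 * |dd a b c k| * r^k) := by ring

lemma summable_S2 (a b c : ℝ) (hc : ∀ m : ℕ, c ≠ -(m : ℝ)) {t r : ℝ} (hr0 : 0 < r)
    (hr1 : r < 1) (ht : |t| ≤ r) :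
    Summable (fun k : ℕ => dd a b c k * ((k:ℝ) * ((↑(k-1):ℝ) * t^(k-2)))) := by
  apply dd_summable' a b c hc hr0 hr1 _ (r⁻¹ * r⁻¹) (by positivity)
  intro k
  rw [abs_mul, abs_mul, abs_mul, abs_pow, Nat.abs_cast, Nat.abs_cast]
  have h1 : |t|^(k-2) ≤ r^(k-2) := pow_le_pow_left₀ (abs_nonneg t) ht _
  have h2 := bound2 hr0 k
  have h3 : (0:ℝ) ≤ |dd a b c k| := abs_nonneg _
  calc |dd a b c k| * ((k:ℝ) * ((↑(k-1):ℝ) * |t|^(k-2)))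
      ≤ |dd a b c k| * ((k:ℝ) * ((↑(k-1):ℝ) * r^(k-2))) := by
        have : (k:ℝ) * ((↑(k-1):ℝ) * |t|^(k-2)) ≤ (k:ℝ) * ((↑(k-1):ℝ) * r^(k-2)) := by
          have := mul_le_mul_of_nonneg_left h1 (by positivity : (0:ℝ) ≤ ((k-1:ℕ):ℝ))
          exact mul_le_mul_of_nonneg_left this (Nat.cast_nonneg k)
        exact mul_le_mul_of_nonneg_left this h3
    _ ≤ |dd a b c k| * (r⁻¹ * r⁻¹ * (((k:ℝ)+1)^2 * r^k)) := by
        have h2' : (k:ℝ) * ((↑(k-1):ℝ) * r^(k-2)) ≤ r⁻¹ * r⁻¹ * (((k:ℝ)+1)^2 * r^k) := by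
          calc (k:ℝ) * ((↑(k-1):ℝ) * r^(k-2)) = (k:ℝ) * ((↑(k-1):ℝ) * r^(k-2)) := rfl
          _ ≤ r⁻¹ * r⁻¹ * (((k:ℝ)+1)^2 * r^k) := by
              have := bound2 hr0 k
              linarith [this]
        exact mul_le_mul_of_nonneg_left h2' h3
    _ = r⁻¹ * r⁻¹ * (((k:ℝ)+1)^2 * |dd a b c k| * r^k) := by ring

lemma hasDerivAt_FF (a b c : ℝ) (hc : ∀ m : ℕ, c ≠ -(m : ℝ)) {t : ℝ} (ht : |t| < 1) :
    HasDerivAt (fun x => ∑' k : ℕ, dd a b c k * x^k)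
      (∑' k : ℕ, dd a b c k * ((k:ℝ) * t^(k-1))) t := by
  set r : ℝ := (1 + |t|)/2 with hr
  have hr0 : 0 < r := by positivity
  have hr1 : r < 1 := by rw [hr]; linarith
  have htr : |t| < r := by rw [hr]; linarith [abs_nonneg t]
  apply hasDerivAt_tsum_of_isPreconnected
    (u := fun k => |dd a b c k| * ((k:ℝ) * r^(k-1)))
    (g' := fun k y => dd a b c k * ((k:ℝ) * y^(k-1)))
    (t := Ioo (-r) r) (y₀ := 0)
  · apply dd_summable' a b c hc hr0 hr1 _ r⁻¹ (by positivity)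
    intro k
    rw [abs_mul, abs_abs, abs_mul, Nat.abs_cast, abs_pow, abs_of_pos hr0]
    exact le_trans (mul_le_mul_of_nonneg_left (bound1 hr0 k) (abs_nonneg _))
      (le_of_eq (by ring))
  · exact isOpen_Ioo
  · exact isPreconnected_Ioo
  · intro n y _
    exact HasDerivAt.const_mul (dd a b c n) (hasDerivAt_pow n y)
  · intro n y hy
    have hys : |y| ≤ r := le_of_lt (abs_lt.mpr ⟨hy.1, hy.2⟩)
    rw [Real.norm_eq_abs, abs_mul, abs_mul, Nat.abs_cast, abs_pow]
    have h1 : |y|^(n-1) ≤ r^(n-1) := pow_le_pow_left₀ (abs_nonneg y) hys _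
    exact mul_le_mul_of_nonneg_left
      (mul_le_mul_of_nonneg_left h1 (Nat.cast_nonneg n)) (abs_nonneg _)
  · exact ⟨by linarith, hr0⟩
  · apply summable_of_ne_finset_zero (s := {0,1})
    intro k hk
    simp only [Finset.mem_insert, Finset.mem_singleton] at hk
    push_neg at hk
    have h0 : k - 1 ≠ 0 := by omega
    simp [zero_pow h0]
    omega
  · exact abs_lt.mp htr |> fun h => ⟨h.1, h.2⟩

lemma hasDerivAt_FF1 (a b c : ℝ) (hc : ∀ m : ℕ, c ≠ -(m : ℝ)) {t : ℝ} (ht : |t| < 1) :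
    HasDerivAt (fun x => ∑' k : ℕ, dd a b c k * ((k:ℝ) * x^(k-1)))
      (∑' k : ℕ, dd a b c k * ((k:ℝ) * ((↑(k-1):ℝ) * t^(k-2)))) t := by
  set r : ℝ := (1 + |t|)/2 with hr
  have hr0 : 0 < r := by positivity
  have hr1 : r < 1 := by rw [hr]; linarith
  have htr : |t| < r := by rw [hr]; linarith [abs_nonneg t]
  apply hasDerivAt_tsum_of_isPreconnected
    (u := fun k => |dd a b c k| * ((k:ℝ) * ((↑(k-1):ℝ) * r^(k-2))))
    (g' := fun k y => dd a b c k * ((k:ℝ) * ((↑(k-1):ℝ) * y^(k-2))))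
    (t := Ioo (-r) r) (y₀ := 0)
  · apply dd_summable' a b c hc hr0 hr1 _ (r⁻¹ * r⁻¹) (by positivity)
    intro k
    rw [abs_mul, abs_abs, abs_mul, Nat.abs_cast, abs_mul, Nat.abs_cast, abs_pow,
      abs_of_pos hr0]
    exact le_trans (mul_le_mul_of_nonneg_left (bound2 hr0 k) (abs_nonneg _))
      (le_of_eq (by ring))
  · exact isOpen_Ioo
  · exact isPreconnected_Ioo
  · intro n y _
    have h := HasDerivAt.const_mul (dd a b c n * (n:ℝ)) (hasDerivAt_pow (n-1) y)
    have hnn : n - 1 - 1 = n - 2 := by omega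
    rw [hnn] at h
    simpa [mul_assoc] using h
  · intro n y hy
    have hys : |y| ≤ r := le_of_lt (abs_lt.mpr ⟨hy.1, hy.2⟩)
    rw [Real.norm_eq_abs, abs_mul, abs_mul, Nat.abs_cast, abs_mul, Nat.abs_cast, abs_pow]
    have h1 : |y|^(n-2) ≤ r^(n-2) := pow_le_pow_left₀ (abs_nonneg y) hys _
    refine mul_le_mul_of_nonneg_left (mul_le_mul_of_nonneg_left
      (mul_le_mul_of_nonneg_left h1 (Nat.cast_nonneg _)) (Nat.cast_nonneg n)) (abs_nonneg _)
  · exact ⟨by linarith, hr0⟩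
  · apply summable_of_ne_finset_zero (s := {0,1,2})
    intro k hk
    simp only [Finset.mem_insert, Finset.mem_singleton] at hk
    push_neg at hk
    have h0 : k - 2 ≠ 0 := by omega
    simp [zero_pow h0]
    omega
  · exact abs_lt.mp htr |> fun h => ⟨h.1, h.2⟩

lemma dd_succ_mul (a b c : ℝ) (hc : ∀ m : ℕ, c ≠ -(m : ℝ)) (k : ℕ) :
    dd a b c (k+1) * ((k:ℝ)+1) * (c + k) = dd a b c k * ((a+k)*(b+k)) := by
  have hck : c + (k:ℝ) ≠ 0 := fun h => hc k (by linarith)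
  have hk1 : ((k:ℝ)+1) ≠ 0 := by positivity
  rw [dd_succ a b c hc k]
  field_simp

lemma FF_ode (a b c : ℝ) (hc : ∀ m : ℕ, c ≠ -(m : ℝ)) {t : ℝ} (ht : |t| < 1) :
    t * (1-t) * (∑' k : ℕ, dd a b c k * ((k:ℝ) * ((↑(k-1):ℝ) * t^(k-2))))
      + (c - (a+b+1)*t) * (∑' k : ℕ, dd a b c k * ((k:ℝ) * t^(k-1)))
      - a*b*(∑' k : ℕ, dd a b c k * t^k) = 0 := by
  set r : ℝ := (1 + |t|)/2 with hr
  have hr0 : 0 < r := by positivity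
  have hr1 : r < 1 := by rw [hr]; linarith
  have htr : |t| ≤ r := by rw [hr]; linarith [abs_nonneg t]
  set W0 : ℕ → ℝ := fun k => dd a b c k * t^k with hW0
  set W1 : ℕ → ℝ := fun k => dd a b c k * ((k:ℝ) * t^(k-1)) with hW1
  set W2 : ℕ → ℝ := fun k => dd a b c k * ((k:ℝ) * ((↑(k-1):ℝ) * t^(k-2))) with hW2
  have hS0 : Summable W0 := summable_S0 a b c hc hr0 hr1 htr
  have hS1 : Summable W1 := summable_S1 a b c hc hr0 hr1 htr
  have hS2 : Summable W2 := summable_S2 a b c hc hr0 hr1 htr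
  have hSX : Summable (fun k : ℕ => t * W2 k + c * W1 k) :=
    (hS2.mul_left t).add (hS1.mul_left c)
  have termX : ∀ k : ℕ, t * W2 (k+1) + c * W1 (k+1)
      = dd a b c (k+1) * (((k:ℝ)+1) * (c + k)) * t^k := by
    rintro (_|n)
    · simp [hW1, hW2]; ring
    · have e1 : n+1+1-2 = n := by omega
      have e2 : n+1+1-1 = n+1 := by omega
      have e3 : n+1-1 = n := by omega
      simp only [hW1, hW2, e1, e2, e3]
      push_cast
      rw [pow_succ]
      ring
  have termY : ∀ k : ℕ, t^2 * W2 k + (a+b+1)*t * W1 k + a*b * W0 k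
      = dd a b c k * ((a+k)*(b+k)) * t^k := by
    rintro (_|_|n)
    · simp [hW0, hW1, hW2]; ring
    · simp only [hW0, hW1, hW2]
      norm_num
      ring
    · have e1 : n+2-2 = n := by omega
      have e2 : n+2-1 = n+1 := by omega
      simp only [hW0, hW1, hW2, e1, e2]
      push_cast
      rw [pow_succ, pow_succ]
      ring
  have hXY : ∀ k : ℕ, t * W2 (k+1) + c * W1 (k+1)
      = t^2 * W2 k + (a+b+1)*t * W1 k + a*b * W0 k := by
    intro k
    rw [termX k, termY k]
    linear_combination (t^k) * dd_succ_mul a b c hc k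
  have hX1 : (∑' k : ℕ, (t * W2 k + c * W1 k))
      = ∑' k : ℕ, (t * W2 (k+1) + c * W1 (k+1)) := by
    rw [Summable.tsum_eq_zero_add hSX]
    simp [hW1, hW2]
  have expand : t * (1-t) * (∑' k, W2 k) + (c - (a+b+1)*t) * (∑' k, W1 k)
        - a*b*(∑' k, W0 k)
      = (∑' k : ℕ, (t * W2 k + c * W1 k))
        - (∑' k : ℕ, (t^2 * W2 k + (a+b+1)*t * W1 k + a*b * W0 k)) := by
    rw [Summable.tsum_add (hS2.mul_left t) (hS1.mul_left c),
      Summable.tsum_add ((hS2.mul_left (t^2)).add (hS1.mul_left ((a+b+1)*t))) (hS0.mul_left (a*b)),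
      Summable.tsum_add (hS2.mul_left (t^2)) (hS1.mul_left ((a+b+1)*t)),
      tsum_mul_left, tsum_mul_left, tsum_mul_left, tsum_mul_left, tsum_mul_left]
    ring
  calc t * (1-t) * (∑' k, W2 k) + (c - (a+b+1)*t) * (∑' k, W1 k) - a*b*(∑' k, W0 k)
      = (∑' k : ℕ, (t * W2 k + c * W1 k))
        - (∑' k : ℕ, (t^2 * W2 k + (a+b+1)*t * W1 k + a*b * W0 k)) := expand
    _ = 0 := by rw [hX1, tsum_congr hXY, sub_self]

lemma hasDerivAt_one_sub_rpow {s e : ℝ} (h : 1 - s ≠ 0) :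
    HasDerivAt (fun x : ℝ => (1-x)^e) (-(e * (1-s)^(e-1))) s := by
  have hi : HasDerivAt (fun x : ℝ => 1 - x) (-1) s := by
    simpa using (hasDerivAt_id s).const_sub 1
  have ho : HasDerivAt (fun y : ℝ => y ^ e) (e * (1-s)^(e-1)) (1-s) :=
    Real.hasDerivAt_rpow_const (Or.inl h)
  have h2 := ho.comp s hi
  simpa [Function.comp_def] using h2

/-- with `F` the Gauss hypergeometric series
`₂F₁(θ_0+θ_t+θ_1+1/2, θ_0−θ_t+θ_1+1/2; 1+2θ_1; t)` (here `(x)_k` is the ascending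
Pochhammer symbol), the function
`τ(t) = t^{(θ_1+1/2)²−θ_0²−θ_t²}(1−t)^{(θ_0+1/2)²−θ_t²−θ_1²}·F(t)` satisfies on `(0,1)`
the hypergeometric-type linear second-order ODE of the paper (the case `θ_∞ = 1/2`). -/
theorem conformal_block_chazy_ode (θ0 θt θ1 : ℝ)
    (hc : ∀ m : ℕ, 1 + 2 * θ1 ≠ -(m : ℝ))
    (F : ℝ → ℝ)
    (hF : ∀ t : ℝ, F t = ∑' k : ℕ,
      ((ascPochhammer ℝ k).eval (θ0 + θt + θ1 + 1 / 2) *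
          (ascPochhammer ℝ k).eval (θ0 - θt + θ1 + 1 / 2) /
        ((ascPochhammer ℝ k).eval (1 + 2 * θ1) * (Nat.factorial k : ℝ))) * t ^ k)
    (τ : ℝ → ℝ)
    (hτ : ∀ t ∈ Ioo (0 : ℝ) 1,
      τ t = t ^ ((θ1 + 1 / 2) ^ 2 - θ0 ^ 2 - θt ^ 2) *
        (1 - t) ^ ((θ0 + 1 / 2) ^ 2 - θt ^ 2 - θ1 ^ 2) * F t) :
    ∀ t ∈ Ioo (0 : ℝ) 1,
      deriv (deriv τ) t
        + 2 * ((θ0 ^ 2 - θ1 ^ 2 + θt ^ 2 + 1 / 4) / t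
            + (θ1 ^ 2 - θ0 ^ 2 + θt ^ 2 + 1 / 4) / (t - 1)) * deriv τ t
        + (((θ0 + θ1) ^ 2 + θt ^ 2 - 1 / 4) / (t * (t - 1))
            + ((θ0 ^ 2 + θt ^ 2 - (θ1 + 1 / 2) ^ 2) / t
                + (θt ^ 2 + θ1 ^ 2 - (θ0 + 1 / 2) ^ 2) / (t - 1))
              * ((θ0 ^ 2 + θt ^ 2 - (-θ1 + 1 / 2) ^ 2) / t
                + (θt ^ 2 + θ1 ^ 2 - (-θ0 + 1 / 2) ^ 2) / (t - 1)))
          * τ t = 0 := by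
  intro t ht
  set a : ℝ := θ0 + θt + θ1 + 1 / 2 with ha
  set b : ℝ := θ0 - θt + θ1 + 1 / 2 with hb
  set c : ℝ := 1 + 2 * θ1 with hcc
  set p : ℝ := (θ1 + 1 / 2) ^ 2 - θ0 ^ 2 - θt ^ 2 with hp
  set q : ℝ := (θ0 + 1 / 2) ^ 2 - θt ^ 2 - θ1 ^ 2 with hq
  obtain ⟨ht0, ht1⟩ := ht
  have h1t : (0:ℝ) < 1 - t := by linarith
  have htne : t ≠ 0 := ne_of_gt ht0
  have h1tne : 1 - t ≠ 0 := ne_of_gt h1t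
  have htabs : |t| < 1 := abs_lt.mpr ⟨by linarith, ht1⟩
  have hFd : ∀ x : ℝ, F x = ∑' k : ℕ, dd a b c k * x ^ k := fun x => by
    rw [hF x]; rfl
  -- τ agrees with the explicit function on Ioo 0 1
  have hτT : ∀ s ∈ Ioo (0:ℝ) 1,
      τ s = s ^ p * (1 - s) ^ q * (∑' k : ℕ, dd a b c k * s ^ k) := fun s hs => by
    rw [hτ s hs, hFd s]
  -- first derivative
  have hTd : ∀ s ∈ Ioo (0:ℝ) 1,
      HasDerivAt (fun x : ℝ => x ^ p * (1 - x) ^ q * (∑' k : ℕ, dd a b c k * x ^ k))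
        ((p * s^(p-1) * (1-s)^q - q * s^p * (1-s)^(q-1)) * (∑' k : ℕ, dd a b c k * s ^ k)
          + s^p * (1-s)^q * (∑' k : ℕ, dd a b c k * ((k:ℝ) * s^(k-1)))) s := by
    intro s hs
    have hs0 : (0:ℝ) < s := hs.1
    have hs1 : (0:ℝ) < 1 - s := by linarith [hs.2]
    have habs : |s| < 1 := abs_lt.mpr ⟨by linarith, hs.2⟩
    have h1 : HasDerivAt (fun x : ℝ => x ^ p) (p * s^(p-1)) s :=
      Real.hasDerivAt_rpow_const (Or.inl (ne_of_gt hs0))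
    have h2 := hasDerivAt_one_sub_rpow (e := q) (ne_of_gt hs1)
    have h3 := hasDerivAt_FF a b c hc habs
    have h4 := (h1.mul h2).mul h3
    simp only [Pi.mul_def] at h4
    refine h4.congr_deriv ?_
    ring
  have hderiv1 : ∀ s ∈ Ioo (0:ℝ) 1,
      deriv τ s = (p * s^(p-1) * (1-s)^q - q * s^p * (1-s)^(q-1))
          * (∑' k : ℕ, dd a b c k * s ^ k)
        + s^p * (1-s)^q * (∑' k : ℕ, dd a b c k * ((k:ℝ) * s^(k-1))) := by
    intro s hs
    have hev : τ =ᶠ[nhds s]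
        fun x : ℝ => x ^ p * (1 - x) ^ q * (∑' k : ℕ, dd a b c k * x ^ k) :=
      eventuallyEq_of_mem (isOpen_Ioo.mem_nhds hs) (fun y hy => hτT y hy)
    rw [hev.deriv_eq, (hTd s hs).deriv]
  -- second derivative
  have hev2 : deriv τ =ᶠ[nhds t]
      fun s : ℝ => (p * s^(p-1) * (1-s)^q - q * s^p * (1-s)^(q-1))
          * (∑' k : ℕ, dd a b c k * s ^ k)
        + s^p * (1-s)^q * (∑' k : ℕ, dd a b c k * ((k:ℝ) * s^(k-1))) :=
    eventuallyEq_of_mem (isOpen_Ioo.mem_nhds ⟨ht0, ht1⟩) (fun y hy => hderiv1 y hy)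
  have hA1 : HasDerivAt (fun x : ℝ => x ^ (p-1)) ((p-1) * t^(p-1-1)) t :=
    Real.hasDerivAt_rpow_const (Or.inl htne)
  have hA2 : HasDerivAt (fun x : ℝ => x ^ p) (p * t^(p-1)) t :=
    Real.hasDerivAt_rpow_const (Or.inl htne)
  have hB1 := hasDerivAt_one_sub_rpow (e := q) (s := t) h1tne
  have hB2 := hasDerivAt_one_sub_rpow (e := q-1) (s := t) h1tne
  have hW := hasDerivAt_FF a b c hc htabs
  have hG1d := hasDerivAt_FF1 a b c hc htabs
  have hDd : HasDerivAt
      (fun s : ℝ => (p * s^(p-1) * (1-s)^q - q * s^p * (1-s)^(q-1))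
          * (∑' k : ℕ, dd a b c k * s ^ k)
        + s^p * (1-s)^q * (∑' k : ℕ, dd a b c k * ((k:ℝ) * s^(k-1))))
      ((p*(p-1)*t^(p-1-1)*(1-t)^q - 2*p*q*t^(p-1)*(1-t)^(q-1)
          + q*(q-1)*t^p*(1-t)^(q-1-1)) * (∑' k : ℕ, dd a b c k * t ^ k)
        + 2*(p*t^(p-1)*(1-t)^q - q*t^p*(1-t)^(q-1))
          * (∑' k : ℕ, dd a b c k * ((k:ℝ) * t^(k-1)))
        + t^p*(1-t)^q * (∑' k : ℕ, dd a b c k * ((k:ℝ) * ((↑(k-1):ℝ) * t^(k-2))))) t := by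
    have h5 := ((((hA1.const_mul p).mul hB1).sub ((hA2.const_mul q).mul hB2)).mul hW).add
      ((hA2.mul hB1).mul hG1d)
    simp only [Pi.mul_def, Pi.add_def, Pi.sub_def] at h5
    refine h5.congr_deriv ?_
    ring
  have E2 : deriv (deriv τ) t
      = (p*(p-1)*t^(p-1-1)*(1-t)^q - 2*p*q*t^(p-1)*(1-t)^(q-1)
          + q*(q-1)*t^p*(1-t)^(q-1-1)) * (∑' k : ℕ, dd a b c k * t ^ k)
        + 2*(p*t^(p-1)*(1-t)^q - q*t^p*(1-t)^(q-1))
          * (∑' k : ℕ, dd a b c k * ((k:ℝ) * t^(k-1)))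
        + t^p*(1-t)^q * (∑' k : ℕ, dd a b c k * ((k:ℝ) * ((↑(k-1):ℝ) * t^(k-2)))) := by
    rw [hev2.deriv_eq, hDd.deriv]
  have E1 := hderiv1 t ⟨ht0, ht1⟩
  have E0 := hτT t ⟨ht0, ht1⟩
  have hode := FF_ode a b c hc htabs
  -- rewrite rpow exponents to base t^(p-2), (1-t)^(q-2)
  have ep : p - 1 - 1 = p - 2 := by ring
  have eq' : q - 1 - 1 = q - 2 := by ring
  rw [ep, eq'] at E2
  have hPp : t ^ p = t^(p-2) * (t*t) := by
    rw [show p = (p-2) + 1 + 1 by ring, Real.rpow_add ht0, Real.rpow_add ht0, Real.rpow_one]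
    ring
  have hPp1 : t ^ (p-1) = t^(p-2) * t := by
    rw [show p - 1 = (p-2) + 1 by ring, Real.rpow_add ht0, Real.rpow_one]
  have hQq : (1-t) ^ q = (1-t)^(q-2) * ((1-t)*(1-t)) := by
    rw [show q = (q-2) + 1 + 1 by ring, Real.rpow_add h1t, Real.rpow_add h1t, Real.rpow_one]
    ring
  have hQq1 : (1-t) ^ (q-1) = (1-t)^(q-2) * (1-t) := by
    rw [show q - 1 = (q-2) + 1 by ring, Real.rpow_add h1t, Real.rpow_one]
  rw [hPp, hQq] at E0
  rw [hPp, hPp1, hQq, hQq1] at E1 E2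
  simp only [ha, hb, hcc, hp, hq] at E0 E1 E2 hode
  rw [E0, E1, E2]
  set W : ℝ := ∑' (k : ℕ), dd (θ0 + θt + θ1 + 1 / 2) (θ0 - θt + θ1 + 1 / 2) (1 + 2 * θ1) k * t ^ k with hsW
  set W1 : ℝ := ∑' (k : ℕ), dd (θ0 + θt + θ1 + 1 / 2) (θ0 - θt + θ1 + 1 / 2) (1 + 2 * θ1) k * ((k:ℝ) * t ^ (k-1)) with hsW1
  set W2 : ℝ := ∑' (k : ℕ), dd (θ0 + θt + θ1 + 1 / 2) (θ0 - θt + θ1 + 1 / 2) (1 + 2 * θ1) k * ((k:ℝ) * ((↑(k-1):ℝ) * t ^ (k-2))) with hsW2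
  have hW2eq : W2 = (((θ0+θt+θ1+1/2 + (θ0-θt+θ1+1/2) + 1)*t - (1+2*θ1))*W1
      + (θ0+θt+θ1+1/2)*(θ0-θt+θ1+1/2)*W) / (t*(1-t)) := by
    rw [eq_div_iff (mul_ne_zero htne h1tne)]
    linear_combination hode
  rw [hW2eq]
  have ht1' : t - 1 ≠ 0 := fun h => h1tne (by linarith)
  clear hW2eq hode E0 E1 E2 hDd hev2 hderiv1 hTd hτT hFd hF hτ hW hG1d hA1 hA2 hB1 hB2
  clear hsW hsW1 hsW2
  clear_value W W1 W2
  clear hPp hPp1 hQq hQq1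
  generalize t ^ ((θ1 + 1 / 2) ^ 2 - θ0 ^ 2 - θt ^ 2 - 2) = X
  generalize (1 - t) ^ ((θ0 + 1 / 2) ^ 2 - θt ^ 2 - θ1 ^ 2 - 2) = Y
  field_simp
  ring
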